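/- Two-term functional relation for lower characteristic (0,1): for all real a, c and all complex u, v, θ[a,c;0,1](u,v) · θ[a,c;0,0](u,v) = Θ[a,c;0,1](2u,2v) · Θ[0,0;0,1](0,0) + Θ[a+1,c;0,1](2u,2v) · Θ[1,0;0,1](0,0). -/

import Mathlib

open Complex

/-- Genus-two theta function with real characteristics `a c b d`
(upper characteristics `a, c`, lower characteristics `b, d`),
moduli `τ₁ τ₂ τ₁₂` and complex arguments `x y`. -/
noncomputable def theta (τ₁ τ₂ τ₁₂ : ℂ) (a c b d : ℝ) (x y : ℂ) : ℂ :=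
  ∑' p : ℤ × ℤ,
    Complex.exp
      ((Real.pi : ℂ) * Complex.I *
          (τ₁ * ((p.1 : ℂ) + (a : ℂ) / 2) ^ 2 + τ₂ * ((p.2 : ℂ) + (c : ℂ) / 2) ^ 2 +
            2 * τ₁₂ * ((p.1 : ℂ) + (a : ℂ) / 2) * ((p.2 : ℂ) + (c : ℂ) / 2)) +
        2 * (Real.pi : ℂ) * Complex.I *
          (((p.1 : ℂ) + (a : ℂ) / 2) * (x + (b : ℂ) / 2) +
            ((p.2 : ℂ) + (c : ℂ) / 2) * (y + (d : ℂ) / 2)))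

/-- The same theta function with doubled moduli `2τ₁, 2τ₂, 2τ₁₂`. -/
noncomputable def Theta2 (τ₁ τ₂ τ₁₂ : ℂ) (a c b d : ℝ) (x y : ℂ) : ℂ :=
  theta (2 * τ₁) (2 * τ₂) (2 * τ₁₂) a c b d x y

/-! ### Auxiliary definitions and lemmas -/

/-- The general term of the genus-two theta series. -/
noncomputable def thetaTerm (τ₁ τ₂ τ₁₂ : ℂ) (a c b d : ℝ) (x y : ℂ) (p : ℤ × ℤ) : ℂ :=
  Complex.exp
      ((Real.pi : ℂ) * Complex.I *
          (τ₁ * ((p.1 : ℂ) + (a : ℂ) / 2) ^ 2 + τ₂ * ((p.2 : ℂ) + (c : ℂ) / 2) ^ 2 +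
            2 * τ₁₂ * ((p.1 : ℂ) + (a : ℂ) / 2) * ((p.2 : ℂ) + (c : ℂ) / 2)) +
        2 * (Real.pi : ℂ) * Complex.I *
          (((p.1 : ℂ) + (a : ℂ) / 2) * (x + (b : ℂ) / 2) +
            ((p.2 : ℂ) + (c : ℂ) / 2) * (y + (d : ℂ) / 2)))

lemma theta_eq_tsum (τ₁ τ₂ τ₁₂ : ℂ) (a c b d : ℝ) (x y : ℂ) :
    theta τ₁ τ₂ τ₁₂ a c b d x y = ∑' p : ℤ × ℤ, thetaTerm τ₁ τ₂ τ₁₂ a c b d x y p := rfl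

lemma summable_exp_int (t S : ℝ) (ht : 0 < t) :
    Summable fun n : ℤ => Real.exp (-t * (n : ℝ) ^ 2 + S * |(n : ℝ)|) := by
  have h := summable_pow_mul_jacobiTheta₂_term_bound (S / (2 * Real.pi))
    (T := t / Real.pi) (by positivity) 0
  refine h.congr fun n => ?_
  have hπ := Real.pi_pos
  simp only [pow_zero, one_mul]
  congr 1
  field_simp
  push_cast
  ring

lemma re_aux (τ₁ τ₂ τ₁₂ x y : ℂ) (A C : ℝ) :
    ((Real.pi : ℂ) * Complex.I * (τ₁ * (A : ℂ) ^ 2 + τ₂ * (C : ℂ) ^ 2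
        + 2 * τ₁₂ * (A : ℂ) * (C : ℂ))
      + 2 * (Real.pi : ℂ) * Complex.I * ((A : ℂ) * x + (C : ℂ) * y)).re
    = -Real.pi * (τ₁.im * A ^ 2 + τ₂.im * C ^ 2 + 2 * τ₁₂.im * A * C)
      - 2 * Real.pi * (A * x.im + C * y.im) := by
  simp [Complex.add_re, Complex.mul_re, Complex.mul_im, Complex.add_im, pow_two]
  ring

lemma norm_thetaTerm (τ₁ τ₂ τ₁₂ : ℂ) (a c b d : ℝ) (x y : ℂ) (p : ℤ × ℤ) :
    ‖thetaTerm τ₁ τ₂ τ₁₂ a c b d x y p‖ =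
      Real.exp (-Real.pi * (τ₁.im * ((p.1 : ℝ) + a / 2) ^ 2 + τ₂.im * ((p.2 : ℝ) + c / 2) ^ 2
          + 2 * τ₁₂.im * ((p.1 : ℝ) + a / 2) * ((p.2 : ℝ) + c / 2))
        - 2 * Real.pi * (((p.1 : ℝ) + a / 2) * x.im + ((p.2 : ℝ) + c / 2) * y.im)) := by
  have hA : ((p.1 : ℂ) + (a : ℂ) / 2) = (((p.1 : ℝ) + a / 2 : ℝ) : ℂ) := by push_cast; ring
  have hC : ((p.2 : ℂ) + (c : ℂ) / 2) = (((p.2 : ℝ) + c / 2 : ℝ) : ℂ) := by push_cast; ring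
  rw [thetaTerm, Complex.norm_exp, hA, hC,
    re_aux τ₁ τ₂ τ₁₂ (x + (b : ℂ) / 2) (y + (d : ℂ) / 2)]
  simp

lemma quad_lower {y1 y2 y12 : ℝ} (h1 : 0 < y1) (h2 : 0 < y2) (h12 : y12 ^ 2 < y1 * y2)
    (A C : ℝ) : (y1 * y2 - y12 ^ 2) / (y1 + y2) * (A ^ 2 + C ^ 2) ≤
      y1 * A ^ 2 + y2 * C ^ 2 + 2 * y12 * A * C := by
  rw [div_mul_eq_mul_div, div_le_iff₀ (by linarith)]
  nlinarith [sq_nonneg (y1 * A + y12 * C), sq_nonneg (y2 * C + y12 * A)]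

lemma main_ineq {y1 y2 y12 : ℝ} (h1 : 0 < y1) (h2 : 0 < y2) (h12 : y12 ^ 2 < y1 * y2)
    (xi yi a c m n : ℝ) :
    -Real.pi * (y1 * (m + a / 2) ^ 2 + y2 * (n + c / 2) ^ 2
        + 2 * y12 * (m + a / 2) * (n + c / 2))
      - 2 * Real.pi * ((m + a / 2) * xi + (n + c / 2) * yi) ≤
    (Real.pi * ((y1 * y2 - y12 ^ 2) / (y1 + y2)) * (a / 2) ^ 2
      + Real.pi * ((y1 * y2 - y12 ^ 2) / (y1 + y2)) * (c / 2) ^ 2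
      + 2 * Real.pi * |xi| * (|a| / 2) + 2 * Real.pi * |yi| * (|c| / 2))
    + (-(Real.pi * ((y1 * y2 - y12 ^ 2) / (y1 + y2)) / 2) * m ^ 2 + 2 * Real.pi * |xi| * |m|)
    + (-(Real.pi * ((y1 * y2 - y12 ^ 2) / (y1 + y2)) / 2) * n ^ 2 + 2 * Real.pi * |yi| * |n|) := by
  have hδ : 0 < (y1 * y2 - y12 ^ 2) / (y1 + y2) := div_pos (by nlinarith) (by linarith)
  set δ := (y1 * y2 - y12 ^ 2) / (y1 + y2) with hδdef
  have hq' := mul_le_mul_of_nonneg_left (quad_lower h1 h2 h12 (m + a / 2) (n + c / 2))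
    Real.pi_pos.le
  rw [← hδdef] at hq'
  have hA2 := mul_le_mul_of_nonneg_left
    (show m ^ 2 / 2 - (a / 2) ^ 2 ≤ (m + a / 2) ^ 2 by nlinarith [sq_nonneg (m + a)])
    (show (0:ℝ) ≤ Real.pi * δ by positivity)
  have hC2 := mul_le_mul_of_nonneg_left
    (show n ^ 2 / 2 - (c / 2) ^ 2 ≤ (n + c / 2) ^ 2 by nlinarith [sq_nonneg (n + c)])
    (show (0:ℝ) ≤ Real.pi * δ by positivity)
  have hAx : -(2 * Real.pi) * ((m + a / 2) * xi) ≤ 2 * Real.pi * ((|m| + |a| / 2) * |xi|) := by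
    have e1 : -((m + a / 2) * xi) ≤ |m + a / 2| * |xi| := by
      rw [← abs_mul]; exact neg_le_abs _
    have e2 : |m + a / 2| ≤ |m| + |a| / 2 := by
      calc |m + a / 2| ≤ |m| + |a / 2| := abs_add_le _ _
        _ = |m| + |a| / 2 := by rw [abs_div]; norm_num
    have e3 : -((m + a / 2) * xi) ≤ (|m| + |a| / 2) * |xi| :=
      e1.trans (mul_le_mul_of_nonneg_right e2 (abs_nonneg xi))
    nlinarith [e3, Real.pi_pos]
  have hCy : -(2 * Real.pi) * ((n + c / 2) * yi) ≤ 2 * Real.pi * ((|n| + |c| / 2) * |yi|) := by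
    have e1 : -((n + c / 2) * yi) ≤ |n + c / 2| * |yi| := by
      rw [← abs_mul]; exact neg_le_abs _
    have e2 : |n + c / 2| ≤ |n| + |c| / 2 := by
      calc |n + c / 2| ≤ |n| + |c / 2| := abs_add_le _ _
        _ = |n| + |c| / 2 := by rw [abs_div]; norm_num
    have e3 : -((n + c / 2) * yi) ≤ (|n| + |c| / 2) * |yi| :=
      e1.trans (mul_le_mul_of_nonneg_right e2 (abs_nonneg yi))
    nlinarith [e3, Real.pi_pos]
  nlinarith [hq', hA2, hC2, hAx, hCy]

set_option maxHeartbeats 800000 in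
lemma summable_norm_thetaTerm {τ₁ τ₂ τ₁₂ : ℂ} (h1 : 0 < τ₁.im) (h2 : 0 < τ₂.im)
    (h12 : τ₁₂.im ^ 2 < τ₁.im * τ₂.im) (a c b d : ℝ) (x y : ℂ) :
    Summable fun p : ℤ × ℤ => ‖thetaTerm τ₁ τ₂ τ₁₂ a c b d x y p‖ := by
  have hδ : 0 < (τ₁.im * τ₂.im - τ₁₂.im ^ 2) / (τ₁.im + τ₂.im) :=
    div_pos (by nlinarith) (by linarith)
  set E : ℝ := Real.pi * ((τ₁.im * τ₂.im - τ₁₂.im ^ 2) / (τ₁.im + τ₂.im)) with hE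
  have hEpos : 0 < E := mul_pos Real.pi_pos hδ
  set Cx : ℝ := 2 * Real.pi * |x.im| with hCx
  set Cy : ℝ := 2 * Real.pi * |y.im| with hCy
  set K : ℝ := E * (a / 2) ^ 2 + E * (c / 2) ^ 2 + Cx * (|a| / 2) + Cy * (|c| / 2) with hK
  have maj : Summable fun p : ℤ × ℤ => Real.exp K *
      (Real.exp (-(E / 2) * (p.1 : ℝ) ^ 2 + Cx * |(p.1 : ℝ)|) *
       Real.exp (-(E / 2) * (p.2 : ℝ) ^ 2 + Cy * |(p.2 : ℝ)|)) := by
    refine Summable.mul_left _ ?_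
    have h2' : (0:ℝ) < E / 2 := by linarith
    exact Summable.mul_of_nonneg
      (f := fun m : ℤ => Real.exp (-(E / 2) * (m : ℝ) ^ 2 + Cx * |(m : ℝ)|))
      (g := fun n : ℤ => Real.exp (-(E / 2) * (n : ℝ) ^ 2 + Cy * |(n : ℝ)|))
      (summable_exp_int _ _ h2') (summable_exp_int _ _ h2')
      (fun _ => Real.exp_nonneg _) (fun _ => Real.exp_nonneg _)
  refine maj.of_nonneg_of_le (fun _ => norm_nonneg _) (fun p => ?_)
  rw [norm_thetaTerm, ← Real.exp_add, ← Real.exp_add]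
  apply Real.exp_le_exp.2
  rw [hK, hE, hCx, hCy]
  exact (main_ineq h1 h2 h12 x.im y.im a c (p.1 : ℝ) (p.2 : ℝ)).trans_eq (by ring)

/-- The parity-splitting change of variables. -/
def classEquiv : ((Bool × Bool) × ((ℤ × ℤ) × (ℤ × ℤ))) ≃ ((ℤ × ℤ) × (ℤ × ℤ)) where
  toFun q := ((q.2.1.1 + q.2.2.1 + (if q.1.1 then 1 else 0),
               q.2.1.2 + q.2.2.2 + (if q.1.2 then 1 else 0)),
              (q.2.1.1 - q.2.2.1, q.2.1.2 - q.2.2.2))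
  invFun p := ((decide ((p.1.1 + p.2.1) % 2 = 1), decide ((p.1.2 + p.2.2) % 2 = 1)),
               (((p.1.1 + p.2.1 - (p.1.1 + p.2.1) % 2) / 2,
                 (p.1.2 + p.2.2 - (p.1.2 + p.2.2) % 2) / 2),
                ((p.1.1 - p.2.1 - (p.1.1 + p.2.1) % 2) / 2,
                 (p.1.2 - p.2.2 - (p.1.2 + p.2.2) % 2) / 2)))
  left_inv := by
    rintro ⟨⟨ε₁, ε₂⟩, ⟨⟨K, K'⟩, ⟨J, J'⟩⟩⟩
    cases ε₁ <;> cases ε₂ <;> simp [Prod.ext_iff] <;> omega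
  right_inv := by
    rintro ⟨⟨m, n⟩, ⟨m', n'⟩⟩
    simp only [Prod.ext_iff]
    refine ⟨⟨?_, ?_⟩, ?_, ?_⟩
    · rcases Int.emod_two_eq (m + m') with h | h <;> simp [h] <;> omega
    · rcases Int.emod_two_eq (n + n') with h | h <;> simp [h] <;> omega
    · omega
    · omega

def negEquiv (k : ℤ) : (ℤ × ℤ) ≃ (ℤ × ℤ) where
  toFun p := (-k - p.1, -1 - p.2)
  invFun p := (-k - p.1, -1 - p.2)
  left_inv p := by simp
  right_inv p := by simp

lemma neg_exp_eq (w : ℂ) (n : ℤ) :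
    -Complex.exp w = Complex.exp (w + ((Real.pi : ℂ) * Complex.I +
      (n : ℂ) * (2 * (Real.pi : ℂ) * Complex.I))) := by
  rw [Complex.exp_add, Complex.exp_add]
  rw [show ((n : ℂ) * (2 * (Real.pi : ℂ) * Complex.I)) =
    (n : ℂ) * (2 * (Real.pi : ℝ) * Complex.I) from rfl]
  rw [Complex.exp_int_mul_two_pi_mul_I, Complex.exp_pi_mul_I]
  ring

lemma tsum_vanish (σ₁ σ₂ σ₁₂ : ℂ) (k : ℤ) :
    ∑' p : ℤ × ℤ, thetaTerm σ₁ σ₂ σ₁₂ (k : ℝ) 1 0 1 0 0 p = 0 := by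
  set f := thetaTerm σ₁ σ₂ σ₁₂ (k : ℝ) 1 0 1 0 0 with hf
  have key : ∀ p : ℤ × ℤ, f (negEquiv k p) = -f p := by
    intro p
    rw [hf]
    simp only [negEquiv, Equiv.coe_fn_mk, thetaTerm]
    rw [neg_exp_eq _ (-p.2 - 1)]
    congr 1
    push_cast
    ring
  have h := (negEquiv k).tsum_eq f
  have h2 : ∑' p, f (negEquiv k p) = -∑' p, f p := by
    rw [tsum_congr key, tsum_neg]
  have h3 := h.symm.trans h2
  exact add_self_eq_zero.mp (by linear_combination h3)

section classes

variable (τ₁ τ₂ τ₁₂ : ℂ) (a c : ℝ) (u v : ℂ)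

lemma class_ff (z : (ℤ × ℤ) × (ℤ × ℤ)) :
    thetaTerm τ₁ τ₂ τ₁₂ a c 0 1 u v (classEquiv ((false, false), z)).1 *
      thetaTerm τ₁ τ₂ τ₁₂ a c 0 0 u v (classEquiv ((false, false), z)).2 =
    thetaTerm (2 * τ₁) (2 * τ₂) (2 * τ₁₂) a c 0 1 (2 * u) (2 * v) z.1 *
      thetaTerm (2 * τ₁) (2 * τ₂) (2 * τ₁₂) 0 0 0 1 0 0 z.2 := by
  obtain ⟨⟨K, K'⟩, J, J'⟩ := z
  simp only [classEquiv, Equiv.coe_fn_mk, thetaTerm, if_false, Bool.false_eq_true]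
  rw [← Complex.exp_add, ← Complex.exp_add]
  congr 1
  push_cast
  ring

lemma class_tf (z : (ℤ × ℤ) × (ℤ × ℤ)) :
    thetaTerm τ₁ τ₂ τ₁₂ a c 0 1 u v (classEquiv ((true, false), z)).1 *
      thetaTerm τ₁ τ₂ τ₁₂ a c 0 0 u v (classEquiv ((true, false), z)).2 =
    thetaTerm (2 * τ₁) (2 * τ₂) (2 * τ₁₂) (a + 1) c 0 1 (2 * u) (2 * v) z.1 *
      thetaTerm (2 * τ₁) (2 * τ₂) (2 * τ₁₂) 1 0 0 1 0 0 z.2 := by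
  obtain ⟨⟨K, K'⟩, J, J'⟩ := z
  simp only [classEquiv, Equiv.coe_fn_mk, thetaTerm, if_false, if_true, Bool.false_eq_true]
  rw [← Complex.exp_add, ← Complex.exp_add]
  congr 1
  push_cast
  ring

lemma class_ft (z : (ℤ × ℤ) × (ℤ × ℤ)) :
    thetaTerm τ₁ τ₂ τ₁₂ a c 0 1 u v (classEquiv ((false, true), z)).1 *
      thetaTerm τ₁ τ₂ τ₁₂ a c 0 0 u v (classEquiv ((false, true), z)).2 =
    thetaTerm (2 * τ₁) (2 * τ₂) (2 * τ₁₂) a (c + 1) 0 1 (2 * u) (2 * v) z.1 *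
      thetaTerm (2 * τ₁) (2 * τ₂) (2 * τ₁₂) 0 1 0 1 0 0 z.2 := by
  obtain ⟨⟨K, K'⟩, J, J'⟩ := z
  simp only [classEquiv, Equiv.coe_fn_mk, thetaTerm, if_false, if_true, Bool.false_eq_true]
  rw [← Complex.exp_add, ← Complex.exp_add]
  congr 1
  push_cast
  ring

lemma class_tt (z : (ℤ × ℤ) × (ℤ × ℤ)) :
    thetaTerm τ₁ τ₂ τ₁₂ a c 0 1 u v (classEquiv ((true, true), z)).1 *
      thetaTerm τ₁ τ₂ τ₁₂ a c 0 0 u v (classEquiv ((true, true), z)).2 =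
    thetaTerm (2 * τ₁) (2 * τ₂) (2 * τ₁₂) (a + 1) (c + 1) 0 1 (2 * u) (2 * v) z.1 *
      thetaTerm (2 * τ₁) (2 * τ₂) (2 * τ₁₂) 1 1 0 1 0 0 z.2 := by
  obtain ⟨⟨K, K'⟩, J, J'⟩ := z
  simp only [classEquiv, Equiv.coe_fn_mk, thetaTerm, if_true]
  rw [← Complex.exp_add, ← Complex.exp_add]
  congr 1
  push_cast
  ring

end classes

set_option maxHeartbeats 1600000 in
theorem two_term_relation_01 (τ₁ τ₂ τ₁₂ : ℂ)
    (hτ₁ : 0 < τ₁.im) (hτ₂ : 0 < τ₂.im) (hτ : τ₁₂.im ^ 2 < τ₁.im * τ₂.im)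
    (a c : ℝ) (u v : ℂ) :
    theta τ₁ τ₂ τ₁₂ a c 0 1 u v * theta τ₁ τ₂ τ₁₂ a c 0 0 u v =
      Theta2 τ₁ τ₂ τ₁₂ a c 0 1 (2 * u) (2 * v) * Theta2 τ₁ τ₂ τ₁₂ 0 0 0 1 0 0 +
        Theta2 τ₁ τ₂ τ₁₂ (a + 1) c 0 1 (2 * u) (2 * v) * Theta2 τ₁ τ₂ τ₁₂ 1 0 0 1 0 0 := by
  -- hypotheses for doubled moduli
  have h1' : 0 < (2 * τ₁).im := by simp [Complex.mul_im]; linarith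
  have h2' : 0 < (2 * τ₂).im := by simp [Complex.mul_im]; linarith
  have h12' : (2 * τ₁₂).im ^ 2 < (2 * τ₁).im * (2 * τ₂).im := by
    simp [Complex.mul_im]; nlinarith
  -- summability
  have hs1 := summable_norm_thetaTerm hτ₁ hτ₂ hτ a c 0 1 u v
  have hs2 := summable_norm_thetaTerm hτ₁ hτ₂ hτ a c 0 0 u v
  have hS : ∀ (a' c' : ℝ) (x y : ℂ),
      Summable fun p : ℤ × ℤ =>
        ‖thetaTerm (2 * τ₁) (2 * τ₂) (2 * τ₁₂) a' c' 0 1 x y p‖ :=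
    fun a' c' x y => summable_norm_thetaTerm h1' h2' h12' a' c' 0 1 x y
  set F : (ℤ × ℤ) × (ℤ × ℤ) → ℂ := fun z =>
    thetaTerm τ₁ τ₂ τ₁₂ a c 0 1 u v z.1 * thetaTerm τ₁ τ₂ τ₁₂ a c 0 0 u v z.2 with hFdef
  have hFsum : Summable F := summable_mul_of_summable_norm hs1 hs2
  have step1 : theta τ₁ τ₂ τ₁₂ a c 0 1 u v * theta τ₁ τ₂ τ₁₂ a c 0 0 u v = ∑' z, F z :=
    tsum_mul_tsum_of_summable_norm hs1 hs2
  have hGsum : Summable (fun q => F (classEquiv q)) := (classEquiv.summable_iff).2 hFsum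
  have step2 : ∑' z, F z = ∑' q, F (classEquiv q) := (classEquiv.tsum_eq F).symm
  have step3 : ∑' q, F (classEquiv q) =
      ∑' ε : Bool × Bool, ∑' z : (ℤ × ℤ) × (ℤ × ℤ), F (classEquiv (ε, z)) :=
    Summable.tsum_prod' hGsum hGsum.prod_factor
  have step4 : ∑' ε : Bool × Bool, ∑' z : (ℤ × ℤ) × (ℤ × ℤ), F (classEquiv (ε, z)) =
      (∑' z : (ℤ × ℤ) × (ℤ × ℤ), F (classEquiv ((false, false), z)))
      + (∑' z : (ℤ × ℤ) × (ℤ × ℤ), F (classEquiv ((false, true), z)))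
      + ((∑' z : (ℤ × ℤ) × (ℤ × ℤ), F (classEquiv ((true, false), z)))
      + (∑' z : (ℤ × ℤ) × (ℤ × ℤ), F (classEquiv ((true, true), z)))) := by
    rw [tsum_fintype]
    rw [Fintype.sum_prod_type, Fintype.sum_bool]
    rw [Fintype.sum_bool, Fintype.sum_bool]
    ring
  -- the four class sums
  have cff : ∑' z : (ℤ × ℤ) × (ℤ × ℤ), F (classEquiv ((false, false), z)) =
      Theta2 τ₁ τ₂ τ₁₂ a c 0 1 (2 * u) (2 * v) * Theta2 τ₁ τ₂ τ₁₂ 0 0 0 1 0 0 := by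
    rw [tsum_congr (class_ff τ₁ τ₂ τ₁₂ a c u v)]
    exact (tsum_mul_tsum_of_summable_norm (hS a c (2 * u) (2 * v)) (hS 0 0 0 0)).symm
  have ctf : ∑' z : (ℤ × ℤ) × (ℤ × ℤ), F (classEquiv ((true, false), z)) =
      Theta2 τ₁ τ₂ τ₁₂ (a + 1) c 0 1 (2 * u) (2 * v) * Theta2 τ₁ τ₂ τ₁₂ 1 0 0 1 0 0 := by
    rw [tsum_congr (class_tf τ₁ τ₂ τ₁₂ a c u v)]
    exact (tsum_mul_tsum_of_summable_norm (hS (a + 1) c (2 * u) (2 * v)) (hS 1 0 0 0)).symm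
  have cft : ∑' z : (ℤ × ℤ) × (ℤ × ℤ), F (classEquiv ((false, true), z)) = 0 := by
    rw [tsum_congr (class_ft τ₁ τ₂ τ₁₂ a c u v)]
    rw [← tsum_mul_tsum_of_summable_norm (hS a (c + 1) (2 * u) (2 * v)) (hS 0 1 0 0)]
    have hv := tsum_vanish (2 * τ₁) (2 * τ₂) (2 * τ₁₂) 0
    norm_num at hv
    rw [hv, mul_zero]
  have ctt : ∑' z : (ℤ × ℤ) × (ℤ × ℤ), F (classEquiv ((true, true), z)) = 0 := by
    rw [tsum_congr (class_tt τ₁ τ₂ τ₁₂ a c u v)]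
    rw [← tsum_mul_tsum_of_summable_norm (hS (a + 1) (c + 1) (2 * u) (2 * v)) (hS 1 1 0 0)]
    have hv := tsum_vanish (2 * τ₁) (2 * τ₂) (2 * τ₁₂) 1
    norm_num at hv
    rw [hv, mul_zero]
  rw [step1, step2, step3, step4, cff, ctf, cft, ctt]
  ring
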